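/- For every vector field v in the Sobolev space H^1(R^2, R^2), the L^4 norm of v satisfies |v|_{L^4} ≤ 2^{1/4} |v|_{L^2}^{1/2} |∇v|_{L^2}^{1/2}. -/

import Mathlib

open MeasureTheory Filter Set
open scoped ENNReal RealInnerProductSpace

noncomputable def ladyPhi : ℝ × ℝ → EuclideanSpace ℝ (Fin 2) :=
  fun p => p.1 • EuclideanSpace.single (0 : Fin 2) (1 : ℝ)
    + p.2 • EuclideanSpace.single (1 : Fin 2) (1 : ℝ)

noncomputable def ladyPsi : EuclideanSpace ℝ (Fin 2) ≃ᵐ ℝ × ℝ :=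
  (MeasurableEquiv.toLp 2 (Fin 2 → ℝ)).symm.trans (MeasurableEquiv.piFinTwo fun _ => ℝ)

lemma ladyPsi_symm_eq : ⇑ladyPsi.symm = ladyPhi := by
  funext p
  apply ladyPsi.injective
  rw [MeasurableEquiv.apply_symm_apply]
  have : ladyPsi (ladyPhi p) = (ladyPhi p 0, ladyPhi p 1) := rfl
  rw [this]
  have h0 : ladyPhi p 0 = p.1 := by
    simp [ladyPhi, EuclideanSpace.single_apply]
  have h1 : ladyPhi p 1 = p.2 := by
    simp [ladyPhi, EuclideanSpace.single_apply]
  simp [h0, h1]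

lemma ladyPhi_measurePreserving : MeasurePreserving ladyPhi volume volume := by
  rw [← ladyPsi_symm_eq]
  exact ((volume_preserving_piFinTwo fun _ => ℝ).comp
    (EuclideanSpace.volume_preserving_symm_measurableEquiv_toLp (Fin 2))).symm

lemma ladyPhi_measurableEmbedding : MeasurableEmbedding ladyPhi := by
  rw [← ladyPsi_symm_eq]
  exact ladyPsi.symm.measurableEmbedding

lemma ladyPhi_continuous : Continuous ladyPhi := by
  unfold ladyPhi; fun_prop

lemma ladyPhi_hasDerivAt_fst (y x : ℝ) :
    HasDerivAt (fun x : ℝ => ladyPhi (x, y)) (EuclideanSpace.single (0 : Fin 2) (1 : ℝ)) x := by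
  have h := ((hasDerivAt_id x).smul_const
    (EuclideanSpace.single (0 : Fin 2) (1 : ℝ))).add_const
    (y • EuclideanSpace.single (1 : Fin 2) (1 : ℝ))
  simpa [ladyPhi] using h

lemma ladyPhi_hasDerivAt_snd (x y : ℝ) :
    HasDerivAt (fun y : ℝ => ladyPhi (x, y)) (EuclideanSpace.single (1 : Fin 2) (1 : ℝ)) y := by
  have h := (((hasDerivAt_id y).smul_const
    (EuclideanSpace.single (1 : Fin 2) (1 : ℝ)))).const_add
    (x • EuclideanSpace.single (0 : Fin 2) (1 : ℝ))
  simpa [ladyPhi] using h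

lemma lady_key1d {g g' : ℝ → ℝ} (hd : ∀ x, HasDerivAt g (g' x) x)
    (hgi : Integrable g) (hg'i : Integrable g') (x : ℝ) :
    2 * |g x| ≤ ∫ t, |g' t| := by
  have htop : Tendsto g atTop (nhds 0) :=
    tendsto_zero_of_hasDerivAt_of_integrableOn_Ioi (a := 0) (fun t _ => hd t)
      hg'i.integrableOn hgi.integrableOn
  have hbot : Tendsto g atBot (nhds 0) :=
    tendsto_zero_of_hasDerivAt_of_integrableOn_Iic (a := 0) (fun t _ => hd t)
      hg'i.integrableOn hgi.integrableOn
  have h1 : ∫ t in Ioi x, g' t = 0 - g x :=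
    integral_Ioi_of_hasDerivAt_of_tendsto (hd x).continuousAt.continuousWithinAt
      (fun t _ => hd t) hg'i.integrableOn htop
  have h2 : ∫ t in Iic x, g' t = g x - 0 :=
    integral_Iic_of_hasDerivAt_of_tendsto (hd x).continuousAt.continuousWithinAt
      (fun t _ => hd t) hg'i.integrableOn hbot
  have b1 : |g x| ≤ ∫ t in Ioi x, |g' t| := by
    have h := norm_integral_le_integral_norm (μ := volume.restrict (Ioi x)) g'
    rw [h1] at h
    simpa [Real.norm_eq_abs] using h
  have b2 : |g x| ≤ ∫ t in Iic x, |g' t| := by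
    have h := norm_integral_le_integral_norm (μ := volume.restrict (Iic x)) g'
    rw [h2] at h
    simpa [Real.norm_eq_abs] using h
  have hsplit : (∫ t in Iic x, |g' t|) + (∫ t in Ioi x, |g' t|) = ∫ t, |g' t| := by
    have h := integral_add_compl (measurableSet_Iic (a := x)) hg'i.abs
    simpa [compl_Iic] using h
  linarith

lemma lady_int_mul {α : Type*} [MeasurableSpace α] {μ : Measure α} {E F : Type*}
    [NormedAddCommGroup E] [NormedAddCommGroup F] {f : α → E} {g : α → F}
    (hf : MemLp f 2 μ) (hg : MemLp g 2 μ) :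
    Integrable (fun x => ‖f x‖ * ‖g x‖) μ := by
  have h : MemLp ((fun x => ‖f x‖) • fun x => ‖g x‖) 1 μ :=
    MemLp.smul hg.norm hf.norm (hpqr := ⟨by simp [one_div, ENNReal.inv_two_add_inv_two]⟩)
  exact memLp_one_iff_integrable.mp h

/-- **Ladyzhenskaya inequality in dimension 2.**
For every vector field `v ∈ H¹(ℝ², ℝ²)`, one has
`‖v‖_{L⁴} ≤ 2^(1/4) ‖v‖_{L²}^(1/2) ‖∇v‖_{L²}^(1/2)`. -/
theorem ladyzhenskaya_2d
    (v : EuclideanSpace ℝ (Fin 2) → EuclideanSpace ℝ (Fin 2))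
    (hv_diff : Differentiable ℝ v)
    (hv_L2 : MemLp v 2 (volume : Measure (EuclideanSpace ℝ (Fin 2))))
    (hgrad_L2 : MemLp (fun x => fderiv ℝ v x) 2
      (volume : Measure (EuclideanSpace ℝ (Fin 2)))) :
    (eLpNorm v 4 (volume : Measure (EuclideanSpace ℝ (Fin 2)))).toReal ≤
      (2 : ℝ) ^ ((1 : ℝ)/4) *
        ((eLpNorm v 2 (volume : Measure (EuclideanSpace ℝ (Fin 2)))).toReal) ^ ((1 : ℝ)/2) *
        ((eLpNorm (fun x => fderiv ℝ v x) 2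
            (volume : Measure (EuclideanSpace ℝ (Fin 2)))).toReal) ^ ((1 : ℝ)/2) := by
  classical
  set e0 : EuclideanSpace ℝ (Fin 2) := EuclideanSpace.single (0 : Fin 2) (1 : ℝ) with he0
  set e1 : EuclideanSpace ℝ (Fin 2) := EuclideanSpace.single (1 : Fin 2) (1 : ℝ) with he1
  -- basic objects on ℝ × ℝ
  set u : ℝ × ℝ → EuclideanSpace ℝ (Fin 2) := fun p => v (ladyPhi p) with hu_def
  set D : ℝ × ℝ → (EuclideanSpace ℝ (Fin 2) →L[ℝ] EuclideanSpace ℝ (Fin 2)) :=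
    fun p => fderiv ℝ v (ladyPhi p) with hD_def
  set w : ℝ × ℝ → ℝ := fun p => ⟪u p, u p⟫ with hw_def
  set G1 : ℝ × ℝ → ℝ := fun p => ⟪u p, D p e0⟫ + ⟪D p e0, u p⟫ with hG1_def
  set G2 : ℝ × ℝ → ℝ := fun p => ⟪u p, D p e1⟫ + ⟪D p e1, u p⟫ with hG2_def
  set ρ : ℝ × ℝ → ℝ := fun p => ‖u p‖ * ‖D p‖ with hρ_def
  -- continuity / measurability
  have hvc : Continuous v := hv_diff.continuous
  have huc : Continuous u := hvc.comp ladyPhi_continuous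
  have hDm : Measurable D := (measurable_fderiv ℝ v).comp ladyPhi_measurableEmbedding.measurable
  have hDe0m : Measurable (fun p => D p e0) := by
    have hev : Continuous (fun L : EuclideanSpace ℝ (Fin 2) →L[ℝ] EuclideanSpace ℝ (Fin 2) =>
        L e0) := (ContinuousLinearMap.apply ℝ (EuclideanSpace ℝ (Fin 2)) e0).continuous
    exact hev.measurable.comp hDm
  have hDe1m : Measurable (fun p => D p e1) := by
    have hev : Continuous (fun L : EuclideanSpace ℝ (Fin 2) →L[ℝ] EuclideanSpace ℝ (Fin 2) =>
        L e1) := (ContinuousLinearMap.apply ℝ (EuclideanSpace ℝ (Fin 2)) e1).continuous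
    exact hev.measurable.comp hDm
  have hG1m : Measurable G1 :=
    (huc.measurable.inner hDe0m).add (hDe0m.inner huc.measurable)
  have hG2m : Measurable G2 :=
    (huc.measurable.inner hDe1m).add (hDe1m.inner huc.measurable)
  have hwm : Measurable w := huc.measurable.inner huc.measurable
  -- integrability on the plane
  have hu2 : MemLp u 2 (volume : Measure (ℝ × ℝ)) :=
    hv_L2.comp_measurePreserving ladyPhi_measurePreserving
  have hD2 : MemLp D 2 (volume : Measure (ℝ × ℝ)) :=
    hgrad_L2.comp_measurePreserving ladyPhi_measurePreserving
  have hρi : Integrable ρ (volume : Measure (ℝ × ℝ)) := lady_int_mul hu2 hD2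
  have hwi : Integrable w (volume : Measure (ℝ × ℝ)) := by
    refine (lady_int_mul hu2 hu2).congr (Eventually.of_forall fun p => ?_)
    exact (real_inner_self_eq_norm_mul_norm (u p)).symm
  have hnorm_e0 : ‖e0‖ = 1 := by simp [he0, EuclideanSpace.norm_single]
  have hnorm_e1 : ‖e1‖ = 1 := by simp [he1, EuclideanSpace.norm_single]
  have hG1bound : ∀ p, |G1 p| ≤ 2 * ρ p := by
    intro p
    have hb : ‖D p e0‖ ≤ ‖D p‖ := by
      simpa [hnorm_e0] using (D p).le_opNorm e0
    have h1 : |⟪u p, D p e0⟫| ≤ ‖u p‖ * ‖D p‖ :=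
      (abs_real_inner_le_norm _ _).trans (mul_le_mul_of_nonneg_left hb (norm_nonneg _))
    have h2 : |⟪D p e0, u p⟫| ≤ ‖u p‖ * ‖D p‖ := by
      rw [real_inner_comm]; exact h1
    calc |G1 p| ≤ |⟪u p, D p e0⟫| + |⟪D p e0, u p⟫| := abs_add_le _ _
      _ ≤ 2 * ρ p := by rw [hρ_def]; dsimp only; linarith
  have hG2bound : ∀ p, |G2 p| ≤ 2 * ρ p := by
    intro p
    have hb : ‖D p e1‖ ≤ ‖D p‖ := by
      simpa [hnorm_e1] using (D p).le_opNorm e1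
    have h1 : |⟪u p, D p e1⟫| ≤ ‖u p‖ * ‖D p‖ :=
      (abs_real_inner_le_norm _ _).trans (mul_le_mul_of_nonneg_left hb (norm_nonneg _))
    have h2 : |⟪D p e1, u p⟫| ≤ ‖u p‖ * ‖D p‖ := by
      rw [real_inner_comm]; exact h1
    calc |G2 p| ≤ |⟪u p, D p e1⟫| + |⟪D p e1, u p⟫| := abs_add_le _ _
      _ ≤ 2 * ρ p := by rw [hρ_def]; dsimp only; linarith
  have hG1i : Integrable G1 (volume : Measure (ℝ × ℝ)) := by
    refine Integrable.mono' (hρi.const_mul 2) hG1m.aestronglyMeasurable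
      (Eventually.of_forall fun p => ?_)
    simpa [Real.norm_eq_abs] using hG1bound p
  have hG2i : Integrable G2 (volume : Measure (ℝ × ℝ)) := by
    refine Integrable.mono' (hρi.const_mul 2) hG2m.aestronglyMeasurable
      (Eventually.of_forall fun p => ?_)
    simpa [Real.norm_eq_abs] using hG2bound p
  -- pointwise derivatives along coordinate lines
  have hderiv1 : ∀ y x : ℝ, HasDerivAt (fun x => w (x, y)) (G1 (x, y)) x := by
    intro y x
    have hv' : HasDerivAt (fun x => u (x, y)) (D (x, y) e0) x :=
      (hv_diff (ladyPhi (x, y))).hasFDerivAt.comp_hasDerivAt x (ladyPhi_hasDerivAt_fst y x)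
    exact HasDerivAt.inner ℝ hv' hv'
  have hderiv2 : ∀ x y : ℝ, HasDerivAt (fun y => w (x, y)) (G2 (x, y)) y := by
    intro x y
    have hv' : HasDerivAt (fun y => u (x, y)) (D (x, y) e1) y :=
      (hv_diff (ladyPhi (x, y))).hasFDerivAt.comp_hasDerivAt y (ladyPhi_hasDerivAt_snd x y)
    exact HasDerivAt.inner ℝ hv' hv'
  -- slice integrability over the product structure
  have hwiP : Integrable w ((volume : Measure ℝ).prod volume) := by
    rwa [← Measure.volume_eq_prod]
  have hG1iP : Integrable G1 ((volume : Measure ℝ).prod volume) := by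
    rwa [← Measure.volume_eq_prod]
  have hG2iP : Integrable G2 ((volume : Measure ℝ).prod volume) := by
    rwa [← Measure.volume_eq_prod]
  have hae1 : ∀ᵐ y : ℝ, Integrable (fun x => w (x, y)) volume ∧
      Integrable (fun x => G1 (x, y)) volume :=
    (hwiP.prod_left_ae).and hG1iP.prod_left_ae
  have hae2 : ∀ᵐ x : ℝ, Integrable (fun y => w (x, y)) volume ∧
      Integrable (fun y => G2 (x, y)) volume :=
    (hwiP.prod_right_ae).and hG2iP.prod_right_ae
  set F : ℝ → ℝ := fun y => ∫ x, |G1 (x, y)| with hF_def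
  set Gg : ℝ → ℝ := fun x => ∫ y, |G2 (x, y)| with hGg_def
  have hFm : Measurable F := by
    have h : StronglyMeasurable fun p : ℝ × ℝ => |G1 p| := (hG1m.abs).stronglyMeasurable
    exact h.integral_prod_left'.measurable
  have hGgm : Measurable Gg := by
    have h : StronglyMeasurable fun p : ℝ × ℝ => |G2 p| := (hG2m.abs).stronglyMeasurable
    exact h.integral_prod_right'.measurable
  have hFbound : ∀ᵐ y : ℝ, ∀ x, 2 * w (x, y) ≤ F y := by
    filter_upwards [hae1] with y hy
    intro x
    have h := lady_key1d (hderiv1 y) hy.1 hy.2 x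
    have hwnn : (0:ℝ) ≤ w (x, y) := real_inner_self_nonneg
    calc 2 * w (x, y) = 2 * |w (x, y)| := by rw [abs_of_nonneg hwnn]
      _ ≤ F y := h
  have hGbound : ∀ᵐ x : ℝ, ∀ y, 2 * w (x, y) ≤ Gg x := by
    filter_upwards [hae2] with x hx
    intro y
    have h := lady_key1d (hderiv2 x) hx.1 hx.2 y
    have hwnn : (0:ℝ) ≤ w (x, y) := real_inner_self_nonneg
    calc 2 * w (x, y) = 2 * |w (x, y)| := by rw [abs_of_nonneg hwnn]
      _ ≤ Gg x := h
  -- ENNReal quantities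
  set A : ℝ≥0∞ := ∫⁻ p : ℝ × ℝ, (‖u p‖₊ : ℝ≥0∞) ^ (2:ℝ) with hA_def
  set B : ℝ≥0∞ := ∫⁻ p : ℝ × ℝ, (‖D p‖₊ : ℝ≥0∞) ^ (2:ℝ) with hB_def
  set I4 : ℝ≥0∞ := ∫⁻ p : ℝ × ℝ, (‖u p‖₊ : ℝ≥0∞) ^ (4:ℝ) with hI4_def
  have hum : Measurable fun p : ℝ × ℝ => (‖u p‖₊ : ℝ≥0∞) := huc.measurable.enorm
  have hDem : Measurable fun p : ℝ × ℝ => (‖D p‖₊ : ℝ≥0∞) := hDm.enorm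
  have hconj : Real.HolderConjugate 2 2 := Real.holderConjugate_iff.mpr ⟨one_lt_two, by norm_num⟩
  have hCS : ∫⁻ p : ℝ × ℝ, (‖u p‖₊ : ℝ≥0∞) * (‖D p‖₊ : ℝ≥0∞) ≤
      A ^ ((1:ℝ)/2) * B ^ ((1:ℝ)/2) := by
    have h := ENNReal.lintegral_mul_le_Lp_mul_Lq (volume : Measure (ℝ × ℝ)) hconj
      hum.aemeasurable hDem.aemeasurable
    rw [hA_def, hB_def]
    exact h
  have hmeasH : Measurable fun p : ℝ × ℝ =>
      (2:ℝ≥0∞) * ((‖u p‖₊ : ℝ≥0∞) * (‖D p‖₊ : ℝ≥0∞)) := (hum.mul hDem).const_mul 2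
  have hofreal_bound : ∀ p : ℝ × ℝ, ENNReal.ofReal |G1 p| ≤
      (2:ℝ≥0∞) * ((‖u p‖₊ : ℝ≥0∞) * (‖D p‖₊ : ℝ≥0∞)) := by
    intro p
    calc ENNReal.ofReal |G1 p| ≤ ENNReal.ofReal (2 * ρ p) :=
          ENNReal.ofReal_le_ofReal (hG1bound p)
      _ = (2:ℝ≥0∞) * ((‖u p‖₊ : ℝ≥0∞) * (‖D p‖₊ : ℝ≥0∞)) := by
          rw [ENNReal.ofReal_mul (by norm_num : (0:ℝ) ≤ 2), hρ_def]
          dsimp only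
          rw [ENNReal.ofReal_mul (norm_nonneg _), ofReal_norm, ofReal_norm, enorm_eq_nnnorm,
            enorm_eq_nnnorm]
          norm_num
  have hofreal_bound2 : ∀ p : ℝ × ℝ, ENNReal.ofReal |G2 p| ≤
      (2:ℝ≥0∞) * ((‖u p‖₊ : ℝ≥0∞) * (‖D p‖₊ : ℝ≥0∞)) := by
    intro p
    calc ENNReal.ofReal |G2 p| ≤ ENNReal.ofReal (2 * ρ p) :=
          ENNReal.ofReal_le_ofReal (hG2bound p)
      _ = (2:ℝ≥0∞) * ((‖u p‖₊ : ℝ≥0∞) * (‖D p‖₊ : ℝ≥0∞)) := by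
          rw [ENNReal.ofReal_mul (by norm_num : (0:ℝ) ≤ 2), hρ_def]
          dsimp only
          rw [ENNReal.ofReal_mul (norm_nonneg _), ofReal_norm, ofReal_norm, enorm_eq_nnnorm,
            enorm_eq_nnnorm]
          norm_num
  have hHint : ∫⁻ p : ℝ × ℝ, (2:ℝ≥0∞) * ((‖u p‖₊ : ℝ≥0∞) * (‖D p‖₊ : ℝ≥0∞)) ≤
      2 * (A ^ ((1:ℝ)/2) * B ^ ((1:ℝ)/2)) := by
    rw [lintegral_const_mul 2 (f := fun p : ℝ × ℝ => (‖u p‖₊ : ℝ≥0∞) * (‖D p‖₊ : ℝ≥0∞)) (hum.mul hDem)]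
    exact mul_le_mul_right hCS 2
  have hFlint : ∫⁻ y : ℝ, ENNReal.ofReal (F y) ≤ 2 * (A ^ ((1:ℝ)/2) * B ^ ((1:ℝ)/2)) := by
    have step1 : ∫⁻ y : ℝ, ENNReal.ofReal (F y) ≤
        ∫⁻ y : ℝ, ∫⁻ x : ℝ, (2:ℝ≥0∞) * ((‖u (x, y)‖₊ : ℝ≥0∞) * (‖D (x, y)‖₊ : ℝ≥0∞)) := by
      refine lintegral_mono_ae ?_
      filter_upwards [hae1] with y hy
      have hOf : ENNReal.ofReal (F y) = ∫⁻ x : ℝ, ENNReal.ofReal |G1 (x, y)| :=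
        ofReal_integral_eq_lintegral_ofReal hy.2.abs (Eventually.of_forall fun x => abs_nonneg _)
      rw [hOf]
      exact lintegral_mono fun x => hofreal_bound (x, y)
    have step2 : (∫⁻ y : ℝ, ∫⁻ x : ℝ,
        (2:ℝ≥0∞) * ((‖u (x, y)‖₊ : ℝ≥0∞) * (‖D (x, y)‖₊ : ℝ≥0∞))) =
        ∫⁻ p : ℝ × ℝ, (2:ℝ≥0∞) * ((‖u p‖₊ : ℝ≥0∞) * (‖D p‖₊ : ℝ≥0∞)) := by
      rw [Measure.volume_eq_prod]
      exact (lintegral_prod_symm _ hmeasH.aemeasurable).symm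
    exact step1.trans (step2.le.trans hHint)
  have hGlint : ∫⁻ x : ℝ, ENNReal.ofReal (Gg x) ≤ 2 * (A ^ ((1:ℝ)/2) * B ^ ((1:ℝ)/2)) := by
    have step1 : ∫⁻ x : ℝ, ENNReal.ofReal (Gg x) ≤
        ∫⁻ x : ℝ, ∫⁻ y : ℝ, (2:ℝ≥0∞) * ((‖u (x, y)‖₊ : ℝ≥0∞) * (‖D (x, y)‖₊ : ℝ≥0∞)) := by
      refine lintegral_mono_ae ?_
      filter_upwards [hae2] with x hx
      have hOf : ENNReal.ofReal (Gg x) = ∫⁻ y : ℝ, ENNReal.ofReal |G2 (x, y)| :=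
        ofReal_integral_eq_lintegral_ofReal hx.2.abs (Eventually.of_forall fun y => abs_nonneg _)
      rw [hOf]
      exact lintegral_mono fun y => hofreal_bound2 (x, y)
    have step2 : (∫⁻ x : ℝ, ∫⁻ y : ℝ,
        (2:ℝ≥0∞) * ((‖u (x, y)‖₊ : ℝ≥0∞) * (‖D (x, y)‖₊ : ℝ≥0∞))) =
        ∫⁻ p : ℝ × ℝ, (2:ℝ≥0∞) * ((‖u p‖₊ : ℝ≥0∞) * (‖D p‖₊ : ℝ≥0∞)) := by
      rw [Measure.volume_eq_prod]
      exact (lintegral_prod _ hmeasH.aemeasurable).symm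
    exact step1.trans (step2.le.trans hHint)
  -- pointwise product bound and the main inequality
  have hWF : ∀ᵐ p : ℝ × ℝ ∂(volume : Measure (ℝ × ℝ)),
      ENNReal.ofReal (2 * w p) ≤ ENNReal.ofReal (F p.2) ∧
      ENNReal.ofReal (2 * w p) ≤ ENNReal.ofReal (Gg p.1) := by
    rw [Measure.volume_eq_prod]
    have h1 : ∀ᵐ p : ℝ × ℝ ∂((volume : Measure ℝ).prod volume), ∀ x, 2 * w (x, p.2) ≤ F p.2 :=
      Measure.quasiMeasurePreserving_snd.ae hFbound
    have h2 : ∀ᵐ p : ℝ × ℝ ∂((volume : Measure ℝ).prod volume), ∀ y, 2 * w (p.1, y) ≤ Gg p.1 :=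
      Measure.quasiMeasurePreserving_fst.ae hGbound
    filter_upwards [h1, h2] with p hp1 hp2
    constructor
    · exact ENNReal.ofReal_le_ofReal (by simpa using hp1 p.1)
    · exact ENNReal.ofReal_le_ofReal (by simpa using hp2 p.2)
  have hu4m : Measurable fun p : ℝ × ℝ => (‖u p‖₊ : ℝ≥0∞) ^ (4:ℝ) := by
    exact hum.pow_const _
  have hmain : 4 * I4 ≤ (∫⁻ x : ℝ, ENNReal.ofReal (Gg x)) * (∫⁻ y : ℝ, ENNReal.ofReal (F y)) := by
    have hpt : ∀ᵐ p : ℝ × ℝ ∂(volume : Measure (ℝ × ℝ)),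
        (4:ℝ≥0∞) * (‖u p‖₊ : ℝ≥0∞) ^ (4:ℝ) ≤ ENNReal.ofReal (Gg p.1) * ENNReal.ofReal (F p.2) := by
      filter_upwards [hWF] with p hp
      have hkey : (4:ℝ≥0∞) * (‖u p‖₊ : ℝ≥0∞) ^ (4:ℝ) =
          ENNReal.ofReal (2 * w p) * ENNReal.ofReal (2 * w p) := by
        have hw_eq : w p = ‖u p‖ ^ 2 := real_inner_self_eq_norm_sq (u p)
        rw [hw_eq, ENNReal.ofReal_mul (by norm_num : (0:ℝ) ≤ 2),
          ENNReal.ofReal_pow (norm_nonneg _), ofReal_norm, enorm_eq_nnnorm]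
        have h4 : ((‖u p‖₊ : ℝ≥0∞)) ^ (4:ℝ) = ((‖u p‖₊ : ℝ≥0∞)) ^ (4:ℕ) := by
          rw [← ENNReal.rpow_natCast]
          norm_num
        rw [h4, ENNReal.ofReal_ofNat]
        ring
      rw [hkey]
      exact mul_le_mul' hp.2 hp.1
    calc (4:ℝ≥0∞) * I4 = ∫⁻ p : ℝ × ℝ, (4:ℝ≥0∞) * (‖u p‖₊ : ℝ≥0∞) ^ (4:ℝ) :=
          (lintegral_const_mul 4 hu4m).symm
      _ ≤ ∫⁻ p : ℝ × ℝ, ENNReal.ofReal (Gg p.1) * ENNReal.ofReal (F p.2) :=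
          lintegral_mono_ae hpt
      _ = (∫⁻ x : ℝ, ENNReal.ofReal (Gg x)) * (∫⁻ y : ℝ, ENNReal.ofReal (F y)) := by
          rw [Measure.volume_eq_prod]
          exact lintegral_prod_mul (ENNReal.measurable_ofReal.comp hGgm).aemeasurable
            (ENNReal.measurable_ofReal.comp hFm).aemeasurable
  have hCSsq : (A ^ ((1:ℝ)/2) * B ^ ((1:ℝ)/2)) * (A ^ ((1:ℝ)/2) * B ^ ((1:ℝ)/2)) = A * B := by
    rw [mul_mul_mul_comm, ← ENNReal.rpow_add_of_nonneg ((1:ℝ)/2) ((1:ℝ)/2) (by norm_num)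
      (by norm_num), ← ENNReal.rpow_add_of_nonneg ((1:ℝ)/2) ((1:ℝ)/2) (by norm_num) (by norm_num)]
    norm_num
  have hI4AB : I4 ≤ A * B := by
    have h4 : (4:ℝ≥0∞) * I4 ≤ 4 * (A * B) := by
      calc (4:ℝ≥0∞) * I4 ≤ (∫⁻ x : ℝ, ENNReal.ofReal (Gg x)) *
            (∫⁻ y : ℝ, ENNReal.ofReal (F y)) := hmain
        _ ≤ (2 * (A ^ ((1:ℝ)/2) * B ^ ((1:ℝ)/2))) * (2 * (A ^ ((1:ℝ)/2) * B ^ ((1:ℝ)/2))) :=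
            mul_le_mul' hGlint hFlint
        _ = 4 * ((A ^ ((1:ℝ)/2) * B ^ ((1:ℝ)/2)) * (A ^ ((1:ℝ)/2) * B ^ ((1:ℝ)/2))) := by ring
        _ = 4 * (A * B) := by rw [hCSsq]
    exact (ENNReal.mul_le_mul_iff_right (by norm_num) (by norm_num)).mp h4
  -- transport back to the Euclidean plane
  have hI4E : ∫⁻ z, (‖v z‖₊ : ℝ≥0∞) ^ (4:ℝ)
      ∂(volume : Measure (EuclideanSpace ℝ (Fin 2))) = I4 :=
    (ladyPhi_measurePreserving.lintegral_comp_emb ladyPhi_measurableEmbedding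
      (fun z => (‖v z‖₊ : ℝ≥0∞) ^ (4:ℝ))).symm
  have hAE : ∫⁻ z, (‖v z‖₊ : ℝ≥0∞) ^ (2:ℝ)
      ∂(volume : Measure (EuclideanSpace ℝ (Fin 2))) = A :=
    (ladyPhi_measurePreserving.lintegral_comp_emb ladyPhi_measurableEmbedding
      (fun z => (‖v z‖₊ : ℝ≥0∞) ^ (2:ℝ))).symm
  have hBE : ∫⁻ z, (‖fderiv ℝ v z‖₊ : ℝ≥0∞) ^ (2:ℝ)
      ∂(volume : Measure (EuclideanSpace ℝ (Fin 2))) = B :=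
    (ladyPhi_measurePreserving.lintegral_comp_emb ladyPhi_measurableEmbedding
      (fun z => (‖fderiv ℝ v z‖₊ : ℝ≥0∞) ^ (2:ℝ))).symm
  have hS2 : eLpNorm v 2 (volume : Measure (EuclideanSpace ℝ (Fin 2))) = A ^ ((1:ℝ)/2) := by
    rw [eLpNorm_eq_lintegral_rpow_enorm_toReal two_ne_zero ENNReal.ofNat_ne_top, ← hAE]
    simp only [enorm_eq_nnnorm]
    norm_num
  have hSD : eLpNorm (fun x => fderiv ℝ v x) 2 (volume : Measure (EuclideanSpace ℝ (Fin 2)))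
      = B ^ ((1:ℝ)/2) := by
    rw [eLpNorm_eq_lintegral_rpow_enorm_toReal two_ne_zero ENNReal.ofNat_ne_top, ← hBE]
    simp only [enorm_eq_nnnorm]
    norm_num
  have hS4 : (eLpNorm v 4 (volume : Measure (EuclideanSpace ℝ (Fin 2)))) ^ (4:ℝ) = I4 := by
    rw [eLpNorm_eq_lintegral_rpow_enorm_toReal (by norm_num) (by norm_num), ← hI4E,
      ← ENNReal.rpow_mul]
    simp only [enorm_eq_nnnorm]
    norm_num
  have hkey : eLpNorm v 4 (volume : Measure (EuclideanSpace ℝ (Fin 2))) ≤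
      (eLpNorm v 2 (volume : Measure (EuclideanSpace ℝ (Fin 2)))) ^ ((1:ℝ)/2) *
      (eLpNorm (fun x => fderiv ℝ v x) 2
        (volume : Measure (EuclideanSpace ℝ (Fin 2)))) ^ ((1:ℝ)/2) := by
    have h1 : eLpNorm v 4 (volume : Measure (EuclideanSpace ℝ (Fin 2))) =
        ((eLpNorm v 4 (volume : Measure (EuclideanSpace ℝ (Fin 2)))) ^ (4:ℝ)) ^ ((1:ℝ)/4) := by
      rw [← ENNReal.rpow_mul]
      norm_num
    rw [h1, hS4, hS2, hSD]
    calc I4 ^ ((1:ℝ)/4) ≤ (A * B) ^ ((1:ℝ)/4) := ENNReal.rpow_le_rpow hI4AB (by norm_num)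
      _ = A ^ ((1:ℝ)/4) * B ^ ((1:ℝ)/4) := ENNReal.mul_rpow_of_nonneg _ _ (by norm_num)
      _ = (A ^ ((1:ℝ)/2)) ^ ((1:ℝ)/2) * (B ^ ((1:ℝ)/2)) ^ ((1:ℝ)/2) := by
          rw [← ENNReal.rpow_mul, ← ENNReal.rpow_mul]
          norm_num
  -- take toReal
  have hS2fin : eLpNorm v 2 (volume : Measure (EuclideanSpace ℝ (Fin 2))) ≠ ⊤ :=
    hv_L2.eLpNorm_ne_top
  have hSDfin : eLpNorm (fun x => fderiv ℝ v x) 2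
      (volume : Measure (EuclideanSpace ℝ (Fin 2))) ≠ ⊤ := hgrad_L2.eLpNorm_ne_top
  have hRfin : (eLpNorm v 2 (volume : Measure (EuclideanSpace ℝ (Fin 2)))) ^ ((1:ℝ)/2) *
      (eLpNorm (fun x => fderiv ℝ v x) 2
        (volume : Measure (EuclideanSpace ℝ (Fin 2)))) ^ ((1:ℝ)/2) ≠ ⊤ :=
    ENNReal.mul_ne_top (ENNReal.rpow_ne_top_of_nonneg (by norm_num) hS2fin)
      (ENNReal.rpow_ne_top_of_nonneg (by norm_num) hSDfin)
  have t1 := ENNReal.toReal_mono hRfin hkey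
  rw [ENNReal.toReal_mul, ← ENNReal.toReal_rpow, ← ENNReal.toReal_rpow] at t1
  have h2 : (1:ℝ) ≤ 2 ^ ((1:ℝ)/4) := by
    have h := Real.rpow_le_rpow_of_exponent_le (x := 2) one_le_two
      (by norm_num : (0:ℝ) ≤ 1/4)
    simpa using h
  have hnn : 0 ≤ (eLpNorm v 2 (volume : Measure (EuclideanSpace ℝ (Fin 2)))).toReal ^ ((1:ℝ)/2) *
      (eLpNorm (fun x => fderiv ℝ v x) 2
        (volume : Measure (EuclideanSpace ℝ (Fin 2)))).toReal ^ ((1:ℝ)/2) :=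
    mul_nonneg (Real.rpow_nonneg ENNReal.toReal_nonneg _)
      (Real.rpow_nonneg ENNReal.toReal_nonneg _)
  rw [mul_assoc]
  exact t1.trans (le_mul_of_one_le_left hnn h2)
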